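/- Contracting an interior (non-root, non-leaf-adjacent) edge of a planar binary rooted tree produces a tree with one 4-valent vertex, and every planar rooted tree with exactly one 4-valent vertex and all other internal vertices 3-valent arises in exactly two ways as such a contraction of planar binary rooted trees. Hence, in the free ℚ-vector space on planar binary rooted trees with a signed contraction operator d (where the two expansions of a 4-valent vertex occur with opposite signs), the sum T_i of all planar binary rooted trees with i leaves satisfies: the interior-edge contributions to d(T_i) cancel in pairs. -/

import Mathlib

/-- Planar rooted trees in which every internal vertex is binary (`Tree Unit`) except for
exactly one 4-valent (ternary) vertex. -/
inductive T3 : Type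
  | tern : Tree Unit → Tree Unit → Tree Unit → T3
  | left : T3 → Tree Unit → T3
  | right : Tree Unit → T3 → T3
  deriving DecidableEq

/-- The first binary expansion of the unique ternary vertex: `(a b c) ↦ ((a b) c)`. -/
def e1 : T3 → Tree Unit
  | .tern a b c => .node () (.node () a b) c
  | .left x r => .node () (e1 x) r
  | .right l x => .node () l (e1 x)

/-- The second binary expansion of the unique ternary vertex: `(a b c) ↦ (a (b c))`. -/
def e2 : T3 → Tree Unit
  | .tern a b c => .node () a (.node () b c)
  | .left x r => .node () (e2 x) r
  | .right l x => .node () l (e2 x)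

/-- The multiset of contractions of the interior edges (edges joining two internal
vertices) of a planar binary rooted tree; contracting such an edge creates one
4-valent vertex. -/
def contr : Tree Unit → Multiset T3
  | .nil => 0
  | .node _ l r =>
      (match l with
        | .nil => 0
        | .node _ a b => ({T3.tern a b r} : Multiset T3)) +
      (match r with
        | .nil => 0
        | .node _ a b => ({T3.tern l a b} : Multiset T3)) +
      (contr l).map (fun x => T3.left x r) + (contr r).map (fun x => T3.right l x)

lemma e1_node (x : T3) : ∃ p q, e1 x = .node () p q := by
  cases x <;> exact ⟨_, _, rfl⟩

lemma e2_node (x : T3) : ∃ p q, e2 x = .node () p q := by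
  cases x <;> exact ⟨_, _, rfl⟩

lemma numNodes_e1_e2 (x : T3) : (e1 x).numNodes = (e2 x).numNodes := by
  induction x with
  | tern a b c => simp [e1, e2, Tree.numNodes]; omega
  | left y r ih => simp [e1, e2, Tree.numNodes, ih]
  | right l y ih => simp [e1, e2, Tree.numNodes, ih]

lemma e1_ne_e2 (x : T3) : e1 x ≠ e2 x := by
  induction x with
  | tern a b c =>
    simp only [e1, e2, BinaryTree.node.injEq, ne_eq, not_and]
    rintro - h -
    have := congrArg Tree.numNodes h
    simp [Tree.numNodes] at this
    omega
  | left y r ih =>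
    intro h
    injection h with h1 h2 h3
    exact ih h2
  | right l y ih =>
    intro h
    injection h with h1 h2 h3
    exact ih h3

lemma contr_node (u : Unit) (l r : Tree Unit) :
    contr (Tree.node u l r) =
      (match l with
        | .nil => 0
        | .node _ a b => ({T3.tern a b r} : Multiset T3)) +
      (match r with
        | .nil => 0
        | .node _ a b => ({T3.tern l a b} : Multiset T3)) +
      (contr l).map (fun x => T3.left x r) + (contr r).map (fun x => T3.right l x) := rfl

lemma left_inj (r : Tree Unit) : Function.Injective (fun z => T3.left z r) := by
  intro a b hab; simpa using hab

lemma right_inj (l : Tree Unit) : Function.Injective (fun z => T3.right l z) := by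
  intro a b hab; simpa using hab

lemma node_ne_left (u : Unit) (a b : Tree Unit) : Tree.node u a b ≠ a := by
  intro h
  have := congrArg Tree.numNodes h
  simp [Tree.numNodes] at this
  omega

lemma left_ne_node (u : Unit) (a b : Tree Unit) : a ≠ Tree.node u a b :=
  fun h => node_ne_left u a b h.symm

lemma node_ne_right (u : Unit) (a b : Tree Unit) : Tree.node u a b ≠ b := by
  intro h
  have := congrArg Tree.numNodes h
  simp [Tree.numNodes] at this
  omega

lemma right_ne_node (u : Unit) (a b : Tree Unit) : b ≠ Tree.node u a b :=
  fun h => node_ne_right u a b h.symm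

lemma count_e1 (x : T3) : Multiset.count x (contr (e1 x)) = 1 := by
  induction x with
  | tern a b c =>
    simp only [e1, contr_node]
    cases c with
    | nil =>
      simp [Multiset.count_singleton, Multiset.count_cons, Multiset.count_eq_zero,
        Multiset.mem_map, T3.tern.injEq, node_ne_left, left_ne_node, node_ne_right,
        right_ne_node]
    | node u c1 c2 =>
      simp [Multiset.count_singleton, Multiset.count_cons, Multiset.count_eq_zero,
        Multiset.mem_map, T3.tern.injEq, node_ne_left, left_ne_node, node_ne_right,
        right_ne_node]
  | left y r ih =>
    obtain ⟨p, q, h⟩ := e1_node y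
    rw [h] at ih
    simp only [e1]
    rw [h, contr_node]
    cases r with
    | nil =>
      simp [Multiset.count_eq_zero, Multiset.mem_map,
        Multiset.count_map_eq_count' _ _ (left_inj _), ih]
    | node u a b =>
      simp [Multiset.count_singleton, Multiset.count_eq_zero, Multiset.mem_map,
        Multiset.count_map_eq_count' _ _ (left_inj _), ih]
  | right l y ih =>
    obtain ⟨p, q, h⟩ := e1_node y
    rw [h] at ih
    simp only [e1]
    rw [h, contr_node]
    cases l with
    | nil =>
      simp [Multiset.count_eq_zero, Multiset.mem_map,
        Multiset.count_map_eq_count' _ _ (right_inj _), ih]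
    | node u a b =>
      simp [Multiset.count_singleton, Multiset.count_eq_zero, Multiset.mem_map,
        Multiset.count_map_eq_count' _ _ (right_inj _), ih]

lemma count_e2 (x : T3) : Multiset.count x (contr (e2 x)) = 1 := by
  induction x with
  | tern a b c =>
    simp only [e2, contr_node]
    cases a with
    | nil =>
      simp [Multiset.count_singleton, Multiset.count_cons, Multiset.count_eq_zero,
        Multiset.mem_map, T3.tern.injEq, node_ne_left, left_ne_node, node_ne_right,
        right_ne_node]
    | node u a1 a2 =>
      simp [Multiset.count_singleton, Multiset.count_cons, Multiset.count_eq_zero,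
        Multiset.mem_map, T3.tern.injEq, node_ne_left, left_ne_node, node_ne_right,
        right_ne_node]
  | left y r ih =>
    obtain ⟨p, q, h⟩ := e2_node y
    rw [h] at ih
    simp only [e2]
    rw [h, contr_node]
    cases r with
    | nil =>
      simp [Multiset.count_eq_zero, Multiset.mem_map,
        Multiset.count_map_eq_count' _ _ (left_inj _), ih]
    | node u a b =>
      simp [Multiset.count_singleton, Multiset.count_eq_zero, Multiset.mem_map,
        Multiset.count_map_eq_count' _ _ (left_inj _), ih]
  | right l y ih =>
    obtain ⟨p, q, h⟩ := e2_node y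
    rw [h] at ih
    simp only [e2]
    rw [h, contr_node]
    cases l with
    | nil =>
      simp [Multiset.count_eq_zero, Multiset.mem_map,
        Multiset.count_map_eq_count' _ _ (right_inj _), ih]
    | node u a b =>
      simp [Multiset.count_singleton, Multiset.count_eq_zero, Multiset.mem_map,
        Multiset.count_map_eq_count' _ _ (right_inj _), ih]

lemma mem_contr {x : T3} : ∀ t : Tree Unit, x ∈ contr t → t = e1 x ∨ t = e2 x := by
  intro t
  induction t generalizing x with
  | nil => simp [contr]
  | node u l r ihl ihr =>
    intro hx
    simp only [contr, Multiset.mem_add, Multiset.mem_map] at hx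
    rcases hx with ((h1 | h2) | ⟨y, hy, rfl⟩) | ⟨y, hy, rfl⟩
    · cases l with
      | nil => simp at h1
      | node v a b =>
        simp at h1
        subst h1
        left
        cases u; cases v
        rfl
    · cases r with
      | nil => simp at h2
      | node v a b =>
        simp at h2
        subst h2
        right
        cases u; cases v
        rfl
    · rcases ihl hy with h | h <;> [left; right] <;> cases u <;> simp [e1, e2, h]
    · rcases ihr hy with h | h <;> [left; right] <;> cases u <;> simp [e1, e2, h]

/-- Contracting an interior edge of a planar binary rooted tree produces a tree with one
4-valent vertex, and every such tree arises in exactly two (distinct) ways, namely from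
its two binary expansions.  Hence, for any signed contraction operator `d` (supported on
the contractions, with the two expansions of each 4-valent vertex occurring with opposite
signs), the interior-edge contributions to `d(T_i)` — the sum over all planar binary
rooted trees with `i` leaves, i.e. `i − 1` internal nodes — cancel in pairs. -/
theorem stmt_18 (i : ℕ) (hi : 1 ≤ i) :
    (∀ x : T3,
      Multiset.count x (contr (e1 x)) = 1 ∧
      Multiset.count x (contr (e2 x)) = 1 ∧
      e1 x ≠ e2 x ∧
      ∀ t : Tree Unit, x ∈ contr t → t = e1 x ∨ t = e2 x) ∧
    (∀ d : Tree Unit → (T3 →₀ ℚ),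
      (∀ t x, x ∉ contr t → d t x = 0) →
      (∀ x : T3, d (e1 x) x = -d (e2 x) x) →
      ∑ t ∈ Tree.treesOfNumNodesEq (i - 1), d t = 0) := by
  constructor
  · intro x
    exact ⟨count_e1 x, count_e2 x, e1_ne_e2 x, mem_contr⟩
  · intro d h0 h1
    ext x
    rw [Finsupp.finset_sum_apply, Finsupp.zero_apply]
    by_cases hn : (e1 x).numNodes = i - 1
    · have he1 : e1 x ∈ Tree.treesOfNumNodesEq (i - 1) := BinaryTree.mem_treesOfNumNodesEq.2 hn
      have he2 : e2 x ∈ Tree.treesOfNumNodesEq (i - 1) :=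
        BinaryTree.mem_treesOfNumNodesEq.2 ((numNodes_e1_e2 x).symm.trans hn)
      have hsub : ({e1 x, e2 x} : Finset (Tree Unit)) ⊆ Tree.treesOfNumNodesEq (i - 1) := by
        intro t ht
        rcases Finset.mem_insert.1 ht with rfl | ht
        · exact he1
        · exact (Finset.mem_singleton.1 ht) ▸ he2
      rw [← Finset.sum_subset hsub]
      · rw [Finset.sum_pair (e1_ne_e2 x), h1 x]
        ring_nf
      · intro t _ ht
        apply h0
        intro hmem
        rcases mem_contr t hmem with rfl | rfl
        · exact ht (Finset.mem_insert_self _ _)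
        · exact ht (Finset.mem_insert_of_mem (Finset.mem_singleton_self _))
    · apply Finset.sum_eq_zero
      intro t htmem
      apply h0
      intro hmem
      have htn := BinaryTree.mem_treesOfNumNodesEq.1 htmem
      rcases mem_contr t hmem with rfl | rfl
      · exact hn htn
      · exact hn (by rw [numNodes_e1_e2]; exact htn)
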